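/- (Infeasibility due to per-window normalization constraints, two channels with padding.) Let X : Fin 2 → Fin W → ℝ be a two-channel window with σ(X c) > 0 for each channel c, and let Z : Fin 2 → Fin p → ℝ be defined by Z c = P(N(X c)). Then for every ε > 0 there exists Ẑ : Fin 2 → Fin p → ℝ with sup over (c, j) of |Ẑ c j − Z c j| < ε such that for every X' : Fin 2 → Fin W → ℝ with σ(X' c) ≠ 0 for each c, Ẑ is not equal to the channelwise image c ↦ P(N(X' c)); hence Ẑ lies in the sup-norm ε-ball around Z but outside the feasible set of preprocessed inputs. -/

import Mathlib

/-- Sample mean of a window. -/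
noncomputable def sampleMean (W : ℕ) (x : Fin W → ℝ) : ℝ :=
  (∑ i, x i) / W

/-- Sample standard deviation of a window. -/
noncomputable def sampleStd (W : ℕ) (x : Fin W → ℝ) : ℝ :=
  Real.sqrt ((∑ i, (x i - sampleMean W x) ^ 2) / W)

/-- Per-window z-normalization. -/
noncomputable def znorm (W : ℕ) (x : Fin W → ℝ) : Fin W → ℝ :=
  fun i => (x i - sampleMean W x) / sampleStd W x

/-- Left-zero-padding of a window of length `W` to length `p ≥ W`. -/
def pad (W p : ℕ) (hWp : W ≤ p) (z : Fin W → ℝ) : Fin p → ℝ :=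
  fun j =>
    if h : (j : ℕ) < p - W then 0
    else z ⟨(j : ℕ) - (p - W), by have := j.isLt; omega⟩

lemma sum_znorm_eq_zero (W : ℕ) (hW : 0 < W) (x : Fin W → ℝ) :
    ∑ i, znorm W x i = 0 := by
  unfold znorm
  rw [← Finset.sum_div]
  have : ∑ i, (x i - sampleMean W x) = 0 := by
    rw [Finset.sum_sub_distrib, Finset.sum_const, Finset.card_univ, Fintype.card_fin]
    unfold sampleMean
    have hW' : (W:ℝ) ≠ 0 := Nat.cast_ne_zero.mpr (by omega)
    simp [nsmul_eq_mul, hW']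
    rw [mul_div_assoc', mul_div_cancel_left₀ _ hW', sub_self]
  rw [this, zero_div]

lemma sum_pad (W p : ℕ) (hWp : W ≤ p) (z : Fin W → ℝ) :
    ∑ j, pad W p hWp z j = ∑ i, z i := by
  have L : ∑ j : Fin p, pad W p hWp z j
      = ∑ j ∈ Finset.range p, (if h : j < p then pad W p hWp z ⟨j, h⟩ else 0) := by
    rw [← Fin.sum_univ_eq_sum_range]
    refine Finset.sum_congr rfl fun i _ => ?_
    rw [dif_pos i.isLt]
  have R : ∑ i : Fin W, z i
      = ∑ i ∈ Finset.range W, (if h : i < W then z ⟨i, h⟩ else 0) := by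
    rw [← Fin.sum_univ_eq_sum_range]
    refine Finset.sum_congr rfl fun i _ => ?_
    rw [dif_pos i.isLt]
  rw [L, R]
  rw [Finset.range_eq_Ico,
    ← Finset.sum_Ico_consecutive _ (Nat.zero_le (p - W)) (by omega : p - W ≤ p)]
  have h1 : ∑ j ∈ Finset.Ico 0 (p - W), (if h : j < p then pad W p hWp z ⟨j, h⟩ else 0) = 0 := by
    apply Finset.sum_eq_zero
    intro j hj
    simp only [Finset.mem_Ico] at hj
    rw [dif_pos (by omega)]
    simp only [pad, Fin.val_mk]
    rw [dif_pos (by omega)]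
  rw [h1, zero_add, Finset.sum_Ico_eq_sum_range]
  have hWW : p - (p - W) = W := by omega
  rw [hWW]
  apply Finset.sum_congr rfl
  intro k hk
  simp only [Finset.mem_range] at hk
  rw [dif_pos (by omega : p - W + k < p), dif_pos hk]
  simp only [pad, Fin.val_mk]
  rw [dif_neg (by omega)]
  congr 1
  exact Fin.ext (by simp)

/-- Infeasibility due to per-window normalization constraints (two channels
with padding): for every `ε > 0` there is a point `Ẑ` in the sup-norm
`ε`-ball around the preprocessed window `Z` that is not the preprocessed
image of any two-channel window. -/
theorem preprocessed_ball_contains_infeasible (W p : ℕ) (hW : 2 ≤ W)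
    (hWp : W ≤ p) (X : Fin 2 → Fin W → ℝ)
    (hσ : ∀ c, 0 < sampleStd W (X c))
    (Z : Fin 2 → Fin p → ℝ) (hZ : ∀ c, Z c = pad W p hWp (znorm W (X c)))
    (ε : ℝ) (hε : 0 < ε) :
    ∃ Zhat : Fin 2 → Fin p → ℝ,
      (∀ c j, |Zhat c j - Z c j| < ε) ∧
      ∀ X' : Fin 2 → Fin W → ℝ, (∀ c, sampleStd W (X' c) ≠ 0) →
        Zhat ≠ fun c => pad W p hWp (znorm W (X' c)) := by
  have hWpos : 0 < W := by omega
  have hppos : 0 < p := by omega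
  refine ⟨fun c j => Z c j + ε / 2, ?_, ?_⟩
  · intro c j
    simp only [add_sub_cancel_left]
    rw [abs_of_pos (by linarith)]
    linarith
  · intro X' hX' heq
    have h0 := congrArg (fun f => ∑ j, f j) (congrFun heq 0)
    simp only [Finset.sum_add_distrib, Finset.sum_const, Finset.card_univ,
      Fintype.card_fin, nsmul_eq_mul] at h0
    rw [hZ 0, sum_pad, sum_znorm_eq_zero W hWpos, sum_pad, sum_znorm_eq_zero W hWpos] at h0
    have : (0:ℝ) < p * (ε / 2) := by positivity
    linarith
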